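/- Let X be a nonempty subset of a complete metric space (Y,d), let F be a multivalued mapping from X to Y, and let δ be a complete metric on the graph G = {(x,t) : x ∈ X, t ∈ F(x)} such that the function (x,t) ↦ d(x,t) is continuous on (G,δ). Assume that for each x ∈ X with x ∉ F(x) and each t ∈ F(x) there exist z ∈ X with z ≠ x and v ∈ F(z) satisfying δ((x,t),(z,v)) ≤ d(x,t) − d(z,v). Then F has a fixed point. -/
import Mathlib

open Metric Filter

lemma drop_lemma {G : Type*} [MetricSpace G] [CompleteSpace G] [Nonempty G]
    (φ : G → ℝ) (hφ : Continuous φ) (hφ0 : ∀ p, 0 ≤ φ p) :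
    ∃ p : G, ∀ q : G, dist p q ≤ φ p - φ q → q = p := by
  classical
  set S : G → Set G := fun p => {q | dist p q ≤ φ p - φ q} with hS
  have hself : ∀ p, p ∈ S p := fun p => by simp [hS]
  have htrans : ∀ p q r, q ∈ S p → r ∈ S q → r ∈ S p := by
    intro p q r hq hr
    simp only [hS, Set.mem_setOf_eq] at *
    calc dist p r ≤ dist p q + dist q r := dist_triangle _ _ _
      _ ≤ (φ p - φ q) + (φ q - φ r) := add_le_add hq hr
      _ = φ p - φ r := by ring
  have hbdd : ∀ p, BddBelow (φ '' S p) := fun p =>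
    ⟨0, fun y ⟨q, _, hq⟩ => hq ▸ hφ0 q⟩
  have hne : ∀ p, (φ '' S p).Nonempty := fun p => ⟨φ p, p, hself p, rfl⟩
  have next : ∀ (n : ℕ) (p : G), ∃ q, q ∈ S p ∧ φ q ≤ sInf (φ '' S p) + (1/2)^n := by
    intro n p
    have : sInf (φ '' S p) < sInf (φ '' S p) + (1/2)^n :=
      lt_add_of_pos_right _ (by positivity)
    obtain ⟨y, ⟨q, hq, rfl⟩, hy⟩ := exists_lt_of_csInf_lt (hne p) this
    exact ⟨q, hq, hy.le⟩
  -- build the sequence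
  let u : ℕ → G := fun n => Nat.rec (Classical.arbitrary G)
    (fun n p => (next n p).choose) n
  have hu0 : ∀ n, u (n+1) ∈ S (u n) := fun n => (next n (u n)).choose_spec.1
  have hu1 : ∀ n, φ (u (n+1)) ≤ sInf (φ '' S (u n)) + (1/2)^n :=
    fun n => (next n (u n)).choose_spec.2
  have hchain : ∀ n m, n ≤ m → u m ∈ S (u n) := by
    intro n m h
    induction m, h using Nat.le_induction with
    | base => exact hself _
    | succ m hm ih => exact htrans _ _ _ ih (hu0 m)
  have hanti : Antitone fun n => φ (u n) := by
    refine antitone_nat_of_succ_le fun n => ?_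
    have := hu0 n
    simp only [hS, Set.mem_setOf_eq] at this
    linarith [dist_nonneg (x := u n) (y := u (n+1))]
  set L : ℝ := ⨅ n, φ (u n) with hL
  have hLle : ∀ n, L ≤ φ (u n) := fun n =>
    ciInf_le ⟨0, fun y ⟨n, hn⟩ => hn ▸ hφ0 _⟩ n
  have htend : Tendsto (fun n => φ (u n)) atTop (nhds L) :=
    tendsto_atTop_ciInf hanti ⟨0, fun y ⟨n, hn⟩ => hn ▸ hφ0 _⟩
  have hcauchy : CauchySeq u := by
    refine cauchySeq_of_le_tendsto_0 (fun n => φ (u n) - L) ?_ ?_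
    · intro n m N hn hm
      show dist (u n) (u m) ≤ φ (u N) - L
      rcases le_total n m with h | h
      · have := hchain n m h
        simp only [hS, Set.mem_setOf_eq] at this
        have h2 : φ (u n) ≤ φ (u N) := hanti hn
        linarith [hLle m]
      · have := hchain m n h
        simp only [hS, Set.mem_setOf_eq] at this
        rw [dist_comm]
        have h2 : φ (u m) ≤ φ (u N) := hanti hm
        linarith [hLle n]
    · have := htend.sub (tendsto_const_nhds (α := ℕ) (x := L))
      simpa using this
  obtain ⟨p, hp⟩ := cauchySeq_tendsto_of_complete hcauchy
  have hφp : Tendsto (fun n => φ (u n)) atTop (nhds (φ p)) :=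
    (hφ.tendsto p).comp hp
  have hLp : L = φ p := tendsto_nhds_unique htend hφp
  have hpS : ∀ n, p ∈ S (u n) := by
    intro n
    simp only [hS, Set.mem_setOf_eq]
    have h1 : Tendsto (fun m => dist (u n) (u m)) atTop (nhds (dist (u n) p)) :=
      (continuous_const.dist continuous_id).continuousAt.tendsto.comp hp
    have h2 : Tendsto (fun m => φ (u n) - φ (u m)) atTop (nhds (φ (u n) - φ p)) :=
      tendsto_const_nhds.sub hφp
    refine le_of_tendsto_of_tendsto h1 h2 ?_
    filter_upwards [eventually_ge_atTop n] with m hm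
    exact hchain n m hm
  refine ⟨p, fun q hq => ?_⟩
  have hqS : ∀ n, q ∈ S (u n) := fun n => htrans _ _ _ (hpS n) hq
  have hqge : ∀ n, φ (u (n+1)) - (1/2)^n ≤ φ q := by
    intro n
    have h1 : sInf (φ '' S (u n)) ≤ φ q := csInf_le (hbdd _) ⟨q, hqS n, rfl⟩
    linarith [hu1 n]
  have hfin : φ p ≤ φ q := by
    have ht : Tendsto (fun n => φ (u (n+1)) - (1/2)^n) atTop (nhds (φ p)) := by
      have : Tendsto (fun n : ℕ => ((1:ℝ)/2)^n) atTop (nhds 0) := by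
        apply tendsto_pow_atTop_nhds_zero_of_lt_one <;> norm_num
      simpa [hLp] using (htend.comp (tendsto_add_atTop_nat 1)).sub this
    exact le_of_tendsto ht (Eventually.of_forall hqge)
  have : dist p q ≤ 0 := by linarith [hq]
  exact (eq_of_dist_eq_zero (le_antisymm this dist_nonneg)).symm
theorem fixed_point_of_graph_metric_tool
    {Y : Type*} [MetricSpace Y] [CompleteSpace Y]
    (X : Set Y) (hX : X.Nonempty)
    (F : X → Set Y) (hFne : ∀ x, (F x).Nonempty)
    (mδ : MetricSpace {p : Y × Y // ∃ x : X, ∃ t ∈ F x, p = ((x : Y), t)})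
    (hcomplete : @CompleteSpace _ mδ.toUniformSpace)
    (hcont : @Continuous _ ℝ mδ.toUniformSpace.toTopologicalSpace _
      (fun p : {p : Y × Y // ∃ x : X, ∃ t ∈ F x, p = ((x : Y), t)} =>
        dist (p : Y × Y).1 (p : Y × Y).2))
    (hcond : ∀ x : X, (x : Y) ∉ F x → ∀ t : Y, ∀ ht : t ∈ F x,
      ∃ z : X, z ≠ x ∧ ∃ v : Y, ∃ hv : v ∈ F z,
        mδ.dist ⟨((x : Y), t), ⟨x, t, ht, rfl⟩⟩ ⟨((z : Y), v), ⟨z, v, hv, rfl⟩⟩ ≤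
          dist (x : Y) t - dist (z : Y) v) :
    ∃ x : X, (x : Y) ∈ F x := by
  classical
  obtain ⟨x0, hx0⟩ := hX
  obtain ⟨t0, ht0⟩ := hFne ⟨x0, hx0⟩
  haveI : Nonempty {p : Y × Y // ∃ x : X, ∃ t ∈ F x, p = ((x : Y), t)} :=
    ⟨⟨(x0, t0), ⟨x0, hx0⟩, t0, ht0, rfl⟩⟩
  obtain ⟨p, hp⟩ := @drop_lemma _ mδ hcomplete this
    (fun p : {p : Y × Y // ∃ x : X, ∃ t ∈ F x, p = ((x : Y), t)} =>
      dist (p : Y × Y).1 (p : Y × Y).2) hcont (fun p => dist_nonneg)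
  obtain ⟨x, t, ht, hpt⟩ := p.2
  by_contra hfix
  push_neg at hfix
  obtain ⟨z, hzx, v, hv, hδ⟩ := hcond x (hfix x) t ht
  have hpe : p = ⟨((x : Y), t), ⟨x, t, ht, rfl⟩⟩ := Subtype.ext hpt
  have := hp ⟨((z : Y), v), ⟨z, v, hv, rfl⟩⟩ (by rw [hpe]; exact hδ)
  rw [hpe] at this
  apply hzx
  have := congrArg Subtype.val this
  exact Subtype.ext (congrArg Prod.fst this)
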